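/- Let P, Q : [0,π] → Matrix N N ℝ be continuous, let A, B be real N×N matrices, and let K be a C² matrix-valued function on the triangle {(x,y) : 0 ≤ y ≤ x ≤ π} satisfying: ∂²K/∂x²(x,y) − Q(x)·K(x,y) = ∂²K/∂y²(x,y) − K(x,y)·P(y); K(x,0)·Aᵀ + (∂K/∂y)(x,0)·Bᵀ = 0 for all x; and Q(x) = P(x) + 2·(d/dx)[K(x,x)]. Let λ ∈ ℝ, v ∈ ℝ^N, and let φ : [0,π] → ℝ^N be a C² solution of -φ'' + P·φ = λ·φ with φ(0) = Bᵀ·v and φ'(0) = −Aᵀ·v. Then ψ(x) := φ(x) + ∫₀ˣ K(x,t)·φ(t) dt satisfies -ψ''(x) + Q(x)·ψ(x) = λ·ψ(x) on [0,π], with ψ(0) = Bᵀ·v and ψ'(0) = (−Aᵀ + K(0,0)·Bᵀ)·v. -/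

import Mathlib

open Matrix MeasureTheory Set Filter

attribute [local instance] Matrix.normedAddCommGroup Matrix.normedSpace

open intervalIntegral Topology Function



attribute [local instance] Matrix.normedAddCommGroup Matrix.normedSpace

set_option linter.unusedSectionVars false


variable {E : Type*} [NormedAddCommGroup E] [NormedSpace ℝ E] [CompleteSpace E]

lemma leibniz_aux (f f' : ℝ → ℝ → E)
    (hd : ∀ s t : ℝ, HasDerivAt (fun u => f u t) (f' s t) s)
    (hfc : Continuous (Function.uncurry f)) (hf'c : Continuous (Function.uncurry f'))
    (x : ℝ) :
    HasDerivAt (fun u => ∫ t in (0:ℝ)..u, f u t)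
      (f x x + ∫ t in (0:ℝ)..x, f' x t) x := by
  have hcf : ∀ y : ℝ, Continuous (f y) := fun y =>
    hfc.comp (continuous_const.prodMk continuous_id)
  have hcf' : ∀ y : ℝ, Continuous (f' y) := fun y =>
    hf'c.comp (continuous_const.prodMk continuous_id)
  rw [hasDerivAt_iff_isLittleO, Asymptotics.isLittleO_iff]
  intro c hc
  set a : ℝ := |x| + 1 with ha
  have ha0 : (0:ℝ) < a := by positivity
  set ε : ℝ := c / a with hε
  have hε0 : 0 < ε := by positivity
  have hS : IsCompact ((Icc (-a) a) ×ˢ (Icc (-a) a)) :=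
    (isCompact_Icc).prod isCompact_Icc
  obtain ⟨δ₁, hδ₁0, hδ₁⟩ := Metric.uniformContinuousOn_iff.mp
    (hS.uniformContinuousOn_of_continuous hf'c.continuousOn) ε hε0
  obtain ⟨δ₂, hδ₂0, hδ₂⟩ := Metric.continuousAt_iff.mp (hfc.continuousAt (x := (x,x))) ε hε0
  have hmem : Metric.ball x (min 1 (min δ₁ δ₂)) ∈ 𝓝 x :=
    Metric.ball_mem_nhds x (by positivity)
  filter_upwards [hmem] with y hy
  rw [Metric.mem_ball, Real.dist_eq] at hy
  have hy1 : |y - x| < 1 := lt_of_lt_of_le hy (min_le_left _ _)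
  have hyδ₁ : |y - x| < δ₁ := lt_of_lt_of_le hy ((min_le_right _ _).trans (min_le_left _ _))
  have hyδ₂ : |y - x| < δ₂ := lt_of_lt_of_le hy ((min_le_right _ _).trans (min_le_right _ _))
  have hxa : |x| ≤ a := by simp [ha]
  have hya : |y| ≤ a := by
    have h1 : |y| ≤ |x| + |y - x| := by
      calc |y| = |x + (y - x)| := by ring_nf
      _ ≤ |x| + |y - x| := abs_add_le _ _
    linarith
  have hxa' : x ∈ Icc (-a) a := ⟨by linarith [neg_abs_le x], (le_abs_self x).trans hxa⟩
  have huIccXY : uIcc x y ⊆ Icc (-a) a := by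
    rw [uIcc]
    exact Icc_subset_Icc (le_min (by linarith [neg_abs_le x]) (by linarith [neg_abs_le y]))
      (max_le ((le_abs_self x).trans hxa) ((le_abs_self y).trans hya))
  have huIcc0X : uIcc (0:ℝ) x ⊆ Icc (-a) a := by
    rw [uIcc]
    exact Icc_subset_Icc (le_min (by linarith) (by linarith [neg_abs_le x]))
      (max_le (by linarith) ((le_abs_self x).trans hxa))
  -- pointwise MVT bound for t in uIcc 0 x
  have key1 : ∀ t ∈ uIcc (0:ℝ) x,
      ‖f y t - f x t - (y - x) • f' x t‖ ≤ ε * |y - x| := by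
    intro t ht
    have hta : t ∈ Icc (-a) a := huIcc0X ht
    have hder : ∀ s ∈ uIcc x y,
        HasDerivWithinAt (fun s => f s t - s • f' x t) (f' s t - f' x t) (uIcc x y) s := by
      intro s _
      have h2 : HasDerivAt (fun s : ℝ => s • f' x t) (f' x t) s := by
        simpa using (hasDerivAt_id s).smul_const (f' x t)
      exact ((hd s t).sub h2).hasDerivWithinAt
    have hbound : ∀ s ∈ uIcc x y, ‖f' s t - f' x t‖ ≤ ε := by
      intro s hs
      have hsx : dist s x ≤ |y - x| := by
        have := Real.dist_le_of_mem_uIcc hs (left_mem_uIcc (a := x) (b := y))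
        simpa [Real.dist_eq, abs_sub_comm] using this
      have hsa : s ∈ Icc (-a) a := huIccXY hs
      have hdist : dist (s, t) (x, t) < δ₁ := by
        rw [Prod.dist_eq]
        simp only [dist_self]
        exact lt_of_le_of_lt (max_le (le_refl _) dist_nonneg) (hsx.trans_lt hyδ₁)
      have := hδ₁ (s, t) ⟨hsa, hta⟩ (x, t) ⟨hxa', hta⟩ hdist
      rw [dist_eq_norm] at this
      exact this.le
    have := Convex.norm_image_sub_le_of_norm_hasDerivWithin_le hder hbound
      (convex_uIcc x y) (left_mem_uIcc) (right_mem_uIcc)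
    calc ‖f y t - f x t - (y - x) • f' x t‖
        = ‖(f y t - y • f' x t) - (f x t - x • f' x t)‖ := by
          congr 1
          rw [sub_smul]; abel
      _ ≤ ε * ‖y - x‖ := this
      _ = ε * |y - x| := by rw [Real.norm_eq_abs]
  -- pointwise bound for t in uIcc x y
  have key2 : ∀ t ∈ uIcc x y, ‖f y t - f x x‖ ≤ ε := by
    intro t ht
    have htx : dist t x ≤ |y - x| := by
      have := Real.dist_le_of_mem_uIcc ht (left_mem_uIcc (a := x) (b := y))
      simpa [Real.dist_eq, abs_sub_comm] using this
    have hdist : dist (y, t) (x, x) < δ₂ := by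
      rw [Prod.dist_eq]
      refine lt_of_le_of_lt (max_le ?_ htx) hyδ₂
      rw [Real.dist_eq]
    have := hδ₂ hdist
    rw [dist_eq_norm] at this
    exact this.le
  -- decomposition
  have hint1 : IntervalIntegrable (f y) volume 0 x := (hcf y).intervalIntegrable _ _
  have hint1' : IntervalIntegrable (f y) volume x y := (hcf y).intervalIntegrable _ _
  have hint2 : IntervalIntegrable (f x) volume 0 x := (hcf x).intervalIntegrable _ _
  have hint3 : IntervalIntegrable (f' x) volume 0 x := (hcf' x).intervalIntegrable _ _
  have e1 : (∫ t in (0:ℝ)..y, f y t) = (∫ t in (0:ℝ)..x, f y t) + ∫ t in x..y, f y t :=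
    (integral_add_adjacent_intervals hint1 hint1').symm
  have e2 : (∫ t in (0:ℝ)..x, (f y t - f x t - (y - x) • f' x t))
      = (∫ t in (0:ℝ)..x, f y t) - (∫ t in (0:ℝ)..x, f x t)
        - (y - x) • ∫ t in (0:ℝ)..x, f' x t := by
    have hint4 : IntervalIntegrable (fun t => (y - x) • f' x t) volume 0 x := hint3.smul _
    rw [integral_sub (hint1.sub hint2) hint4, integral_sub hint1 hint2, intervalIntegral.integral_smul]
  have e3 : (∫ t in x..y, (f y t - f x x)) = (∫ t in x..y, f y t) - (y - x) • f x x := by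
    rw [integral_sub hint1' intervalIntegrable_const, intervalIntegral.integral_const]
  have decomp : (∫ t in (0:ℝ)..y, f y t) - (∫ t in (0:ℝ)..x, f x t)
      - (y - x) • (f x x + ∫ t in (0:ℝ)..x, f' x t)
      = (∫ t in (0:ℝ)..x, (f y t - f x t - (y - x) • f' x t))
        + ∫ t in x..y, (f y t - f x x) := by
    rw [e1, e2, e3, smul_add]; abel
  have B1 : ‖∫ t in (0:ℝ)..x, (f y t - f x t - (y - x) • f' x t)‖ ≤ (ε * |y - x|) * |x - 0| :=
    intervalIntegral.norm_integral_le_of_norm_le_const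
      (fun t ht => key1 t (uIoc_subset_uIcc ht))
  have B2 : ‖∫ t in x..y, (f y t - f x x)‖ ≤ ε * |y - x| :=
    intervalIntegral.norm_integral_le_of_norm_le_const
      (fun t ht => key2 t (uIoc_subset_uIcc ht))
  have hc' : c = ε * (|x| + 1) := by rw [hε, ha]; field_simp
  calc ‖(∫ t in (0:ℝ)..y, f y t) - (∫ t in (0:ℝ)..x, f x t)
        - (y - x) • (f x x + ∫ t in (0:ℝ)..x, f' x t)‖
      = ‖(∫ t in (0:ℝ)..x, (f y t - f x t - (y - x) • f' x t))
        + ∫ t in x..y, (f y t - f x x)‖ := by rw [decomp]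
    _ ≤ ‖∫ t in (0:ℝ)..x, (f y t - f x t - (y - x) • f' x t)‖
        + ‖∫ t in x..y, (f y t - f x x)‖ := norm_add_le _ _
    _ ≤ (ε * |y - x|) * |x - 0| + ε * |y - x| := add_le_add B1 B2
    _ = c * ‖y - x‖ := by rw [sub_zero, Real.norm_eq_abs, hc']; ring

variable {E : Type*} [NormedAddCommGroup E] [NormedSpace ℝ E] [CompleteSpace E]

lemma pd1_hasDerivAt (f : ℝ → ℝ → E) (hf : ContDiff ℝ 1 (uncurry f)) (s t : ℝ) :
    HasDerivAt (fun u => f u t) (fderiv ℝ (uncurry f) (s, t) (1, 0)) s :=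
  ((hf.differentiable one_ne_zero) (s, t)).hasFDerivAt.comp_hasDerivAt_of_eq s
    ((hasDerivAt_id s).prodMk (hasDerivAt_const s t)) rfl

lemma pd2_hasDerivAt (f : ℝ → ℝ → E) (hf : ContDiff ℝ 1 (uncurry f)) (s t : ℝ) :
    HasDerivAt (fun u => f s u) (fderiv ℝ (uncurry f) (s, t) (0, 1)) t :=
  ((hf.differentiable one_ne_zero) (s, t)).hasFDerivAt.comp_hasDerivAt t
    ((hasDerivAt_const t s).prodMk (hasDerivAt_id t))

lemma pd1_eq (f : ℝ → ℝ → E) (hf : ContDiff ℝ 1 (uncurry f)) (s t : ℝ) :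
    deriv (fun u => f u t) s = fderiv ℝ (uncurry f) (s, t) (1, 0) :=
  (pd1_hasDerivAt f hf s t).deriv

lemma pd2_eq (f : ℝ → ℝ → E) (hf : ContDiff ℝ 1 (uncurry f)) (s t : ℝ) :
    deriv (fun u => f s u) t = fderiv ℝ (uncurry f) (s, t) (0, 1) :=
  (pd2_hasDerivAt f hf s t).deriv

lemma hasDerivAt_pd1 (f : ℝ → ℝ → E) (hf : ContDiff ℝ 1 (uncurry f)) (s t : ℝ) :
    HasDerivAt (fun u => f u t) (deriv (fun u => f u t) s) s := by
  rw [pd1_eq f hf s t]; exact pd1_hasDerivAt f hf s t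

lemma hasDerivAt_pd2 (f : ℝ → ℝ → E) (hf : ContDiff ℝ 1 (uncurry f)) (s t : ℝ) :
    HasDerivAt (fun u => f s u) (deriv (fun u => f s u) t) t := by
  rw [pd2_eq f hf s t]; exact pd2_hasDerivAt f hf s t

lemma continuous_pd1 (f : ℝ → ℝ → E) (hf : ContDiff ℝ 1 (uncurry f)) :
    Continuous (uncurry fun s t => deriv (fun u => f u t) s) := by
  have : (uncurry fun s t => deriv (fun u => f u t) s)
      = fun p : ℝ × ℝ => fderiv ℝ (uncurry f) p ((1:ℝ), (0:ℝ)) := by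
    funext p
    exact pd1_eq f hf p.1 p.2
  rw [this]
  exact (hf.continuous_fderiv one_ne_zero).clm_apply continuous_const

lemma continuous_pd2 (f : ℝ → ℝ → E) (hf : ContDiff ℝ 1 (uncurry f)) :
    Continuous (uncurry fun s t => deriv (fun u => f s u) t) := by
  have : (uncurry fun s t => deriv (fun u => f s u) t)
      = fun p : ℝ × ℝ => fderiv ℝ (uncurry f) p ((0:ℝ), (1:ℝ)) := by
    funext p
    exact pd2_eq f hf p.1 p.2
  rw [this]
  exact (hf.continuous_fderiv one_ne_zero).clm_apply continuous_const

lemma contDiff_pd1 (f : ℝ → ℝ → E) (hf : ContDiff ℝ 2 (uncurry f)) :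
    ContDiff ℝ 1 (uncurry fun s t => deriv (fun u => f u t) s) := by
  have : (uncurry fun s t => deriv (fun u => f u t) s)
      = fun p : ℝ × ℝ => fderiv ℝ (uncurry f) p ((1:ℝ), (0:ℝ)) := by
    funext p
    exact pd1_eq f (hf.of_le one_le_two) p.1 p.2
  rw [this]
  exact (hf.fderiv_right (by norm_num)).clm_apply contDiff_const

lemma contDiff_pd2 (f : ℝ → ℝ → E) (hf : ContDiff ℝ 2 (uncurry f)) :
    ContDiff ℝ 1 (uncurry fun s t => deriv (fun u => f s u) t) := by
  have : (uncurry fun s t => deriv (fun u => f s u) t)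
      = fun p : ℝ × ℝ => fderiv ℝ (uncurry f) p ((0:ℝ), (1:ℝ)) := by
    funext p
    exact pd2_eq f (hf.of_le one_le_two) p.1 p.2
  rw [this]
  exact (hf.fderiv_right (by norm_num)).clm_apply contDiff_const

lemma deriv_diag (f : ℝ → ℝ → E) (hf : ContDiff ℝ 1 (uncurry f)) (u : ℝ) :
    deriv (fun s => f s s) u = deriv (fun s => f s u) u + deriv (fun t => f u t) u := by
  have h0 : HasDerivAt (fun s : ℝ => (s, s)) ((1:ℝ), (1:ℝ)) u :=
    (hasDerivAt_id u).prodMk (hasDerivAt_id u)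
  have h1 : HasDerivAt (fun s => f s s) (fderiv ℝ (uncurry f) (u, u) ((1:ℝ), (1:ℝ))) u := by
    have h1' : HasDerivAt (uncurry f ∘ fun s : ℝ => (s, s))
        (fderiv ℝ (uncurry f) (u, u) ((1:ℝ), (1:ℝ))) u :=
      ((hf.differentiable one_ne_zero) (u, u)).hasFDerivAt.comp_hasDerivAt_of_eq u h0 rfl
    exact h1'
  rw [h1.deriv, pd1_eq f hf u u, pd2_eq f hf u u]
  rw [show ((1:ℝ), (1:ℝ)) = ((1:ℝ), (0:ℝ)) + ((0:ℝ), (1:ℝ)) by simp]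
  rw [map_add]

lemma contDiff_one_deriv {f : ℝ → E} (hf : ContDiff ℝ 2 f) : ContDiff ℝ 1 (deriv f) := by
  have := (contDiff_succ_iff_deriv (n := 1)).mp (by exact_mod_cast hf)
  exact this.2.2

lemma hasDerivAt_diag (f : ℝ → ℝ → E) (hf : ContDiff ℝ 1 (uncurry f)) (u : ℝ) :
    HasDerivAt (fun s => f s s) (deriv (fun s => f s s) u) u := by
  have h0 : HasDerivAt (fun s : ℝ => (s, s)) ((1:ℝ), (1:ℝ)) u :=
    (hasDerivAt_id u).prodMk (hasDerivAt_id u)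
  have h1 : HasDerivAt (fun s => f s s) (fderiv ℝ (uncurry f) (u, u) ((1:ℝ), (1:ℝ))) u := by
    have h1' : HasDerivAt (uncurry f ∘ fun s : ℝ => (s, s))
        (fderiv ℝ (uncurry f) (u, u) ((1:ℝ), (1:ℝ))) u :=
      ((hf.differentiable one_ne_zero) (u, u)).hasFDerivAt.comp_hasDerivAt_of_eq u h0 rfl
    exact h1'
  exact h1.deriv ▸ h1


variable {n : ℕ}

noncomputable def mulVecCLM (n : ℕ) :
    Matrix (Fin n) (Fin n) ℝ →L[ℝ] ((Fin n → ℝ) →L[ℝ] (Fin n → ℝ)) :=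
  LinearMap.toContinuousLinearMap
    { toFun := fun M => LinearMap.toContinuousLinearMap (Matrix.mulVecLin M)
      map_add' := by
        intro M N
        ext v
        simp [Matrix.add_mulVec]
      map_smul' := by
        intro c M
        ext v
        simp [Matrix.smul_mulVec] }

@[simp] lemma mulVecCLM_apply (M : Matrix (Fin n) (Fin n) ℝ) (v : Fin n → ℝ) :
    mulVecCLM n M v = M *ᵥ v := rfl

lemma hasDerivAt_mulVec {M : ℝ → Matrix (Fin n) (Fin n) ℝ} {M' : Matrix (Fin n) (Fin n) ℝ}
    {w : ℝ → Fin n → ℝ} {w' : Fin n → ℝ} {x : ℝ}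
    (hM : HasDerivAt M M' x) (hw : HasDerivAt w w' x) :
    HasDerivAt (fun s => M s *ᵥ w s) (M' *ᵥ w x + M x *ᵥ w') x := by
  have h1 : HasDerivAt (fun s => mulVecCLM n (M s)) (mulVecCLM n M') x := by
    have := (mulVecCLM n).hasFDerivAt.comp_hasDerivAt_of_eq x hM rfl
    exact this
  exact h1.clm_apply hw

lemma continuous_mulVec2 {X : Type*} [TopologicalSpace X]
    {M : X → Matrix (Fin n) (Fin n) ℝ} {w : X → Fin n → ℝ}
    (hM : Continuous M) (hw : Continuous w) :
    Continuous (fun p => M p *ᵥ w p) :=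
  (((mulVecCLM n).continuous.comp hM).clm_apply hw)

lemma contDiff_mulVec2 {m : ℕ∞} {X : Type*} [NormedAddCommGroup X] [NormedSpace ℝ X]
    {M : X → Matrix (Fin n) (Fin n) ℝ} {w : X → Fin n → ℝ}
    (hM : ContDiff ℝ m M) (hw : ContDiff ℝ m w) :
    ContDiff ℝ m (fun p => M p *ᵥ w p) :=
  (((mulVecCLM n).contDiff.comp hM).clm_apply hw)

/-- If `K` satisfies the matrix wave equation with boundary condition
`K(x,0)·Aᵀ + K_y(x,0)·Bᵀ = 0` and `Q = P + 2 (d/dx) K(x,x)`, and `φ` solves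
`-φ'' + P·φ = λ·φ` with `φ(0) = Bᵀ·v`, `φ'(0) = -Aᵀ·v`, then
`ψ(x) := φ(x) + ∫₀ˣ K(x,t)·φ(t) dt` solves `-ψ'' + Q·ψ = λ·ψ` with `ψ(0) = Bᵀ·v` and
`ψ'(0) = (-Aᵀ + K(0,0)·Bᵀ)·v`. -/
theorem transformed_solution
    (N : ℕ) (hN : 1 ≤ N)
    (P Q : ℝ → Matrix (Fin N) (Fin N) ℝ) (A B : Matrix (Fin N) (Fin N) ℝ)
    (hP : ContinuousOn P (Set.Icc 0 Real.pi))
    (hQ : ContinuousOn Q (Set.Icc 0 Real.pi))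
    (K : ℝ → ℝ → Matrix (Fin N) (Fin N) ℝ)
    (hKC : ContDiff ℝ 2 (Function.uncurry K))
    (hKwave : ∀ x y : ℝ, 0 ≤ y → y ≤ x → x ≤ Real.pi →
      deriv (deriv (fun s => K s y)) x - Q x * K x y
        = deriv (deriv (fun t => K x t)) y - K x y * P y)
    (hKbc : ∀ x ∈ Set.Icc (0:ℝ) Real.pi,
      K x 0 * Aᵀ + deriv (fun t => K x t) 0 * Bᵀ = 0)
    (hQdef : ∀ x ∈ Set.Icc (0:ℝ) Real.pi,
      Q x = P x + (2:ℝ) • deriv (fun s => K s s) x)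
    (lam : ℝ) (v : Fin N → ℝ) (φ : ℝ → Fin N → ℝ)
    (hφC : ContDiff ℝ 2 φ)
    (hφeq : ∀ x ∈ Set.Icc (0:ℝ) Real.pi,
      -(deriv (deriv φ) x) + P x *ᵥ φ x = lam • φ x)
    (hφ0 : φ 0 = Bᵀ *ᵥ v) (hφ0' : deriv φ 0 = -Aᵀ *ᵥ v)
    (ψ : ℝ → Fin N → ℝ)
    (hψ : ∀ x : ℝ, ψ x = φ x + ∫ t in (0:ℝ)..x, K x t *ᵥ φ t) :
    (∀ x ∈ Set.Icc (0:ℝ) Real.pi,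
      -(deriv (deriv ψ) x) + Q x *ᵥ ψ x = lam • ψ x) ∧
    ψ 0 = Bᵀ *ᵥ v ∧
    deriv ψ 0 = (-Aᵀ + K 0 0 * Bᵀ) *ᵥ v := by
  have hψfun : ψ = fun u => φ u + ∫ t in (0:ℝ)..u, K u t *ᵥ φ t := funext hψ
  subst hψfun
  -- basic regularity
  have hK1 : ContDiff ℝ 1 (uncurry K) := hKC.of_le one_le_two
  have hKx1 : ContDiff ℝ 1 (uncurry fun s t => deriv (fun u => K u t) s) := contDiff_pd1 K hKC
  have hKy1 : ContDiff ℝ 1 (uncurry fun s t => deriv (fun u => K s u) t) := contDiff_pd2 K hKC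
  have hφ1 : ∀ s, HasDerivAt φ (deriv φ s) s :=
    fun s => ((hφC.differentiable two_ne_zero) s).hasDerivAt
  have hφd : ContDiff ℝ 1 (deriv φ) := contDiff_one_deriv hφC
  have hφ2 : ∀ s, HasDerivAt (deriv φ) (deriv (deriv φ) s) s :=
    fun s => ((hφd.differentiable one_ne_zero) s).hasDerivAt
  have hφc : Continuous φ := hφC.continuous
  have hφ'c : Continuous (deriv φ) := hφd.continuous
  have hφ''c : Continuous (deriv (deriv φ)) := hφd.continuous_deriv le_rfl
  have hKc : Continuous (uncurry K) := hK1.continuous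
  have hKxc : Continuous (uncurry fun s t => deriv (fun u => K u t) s) := hKx1.continuous
  have hKyc : Continuous (uncurry fun s t => deriv (fun u => K s u) t) := hKy1.continuous
  have hKxxc : Continuous (uncurry fun s t => deriv (fun u => deriv (fun u' => K u' t) u) s) :=
    continuous_pd1 (fun s t => deriv (fun u' => K u' t) s) hKx1
  have hKyyc : Continuous (uncurry fun s t => deriv (fun u => deriv (fun u' => K s u') u) t) :=
    continuous_pd2 (fun s t => deriv (fun u' => K s u') t) hKy1
  -- joint continuity of integrands
  have hFc : Continuous (uncurry fun s t => K s t *ᵥ φ t) :=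
    continuous_mulVec2 hKc (hφc.comp continuous_snd)
  have hFxc : Continuous (uncurry fun s t => deriv (fun u => K u t) s *ᵥ φ t) :=
    continuous_mulVec2 hKxc (hφc.comp continuous_snd)
  have hFxxc : Continuous
      (uncurry fun s t => deriv (fun u => deriv (fun u' => K u' t) u) s *ᵥ φ t) :=
    continuous_mulVec2 hKxxc (hφc.comp continuous_snd)
  -- derivative in the first slot of the integrand
  have hFd : ∀ s t : ℝ, HasDerivAt (fun u => K u t *ᵥ φ t)
      (deriv (fun u => K u t) s *ᵥ φ t) s := by
    intro s t
    have := hasDerivAt_mulVec (hasDerivAt_pd1 K hK1 s t) (hasDerivAt_const s (φ t))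
    simp at this; exact this
  have hFxd : ∀ s t : ℝ, HasDerivAt (fun u => deriv (fun u' => K u' t) u *ᵥ φ t)
      (deriv (fun u => deriv (fun u' => K u' t) u) s *ᵥ φ t) s := by
    intro s t
    have := hasDerivAt_mulVec
      (hasDerivAt_pd1 (fun a b => deriv (fun u' => K u' b) a) hKx1 s t) (hasDerivAt_const s (φ t))
    simp at this; exact this
  -- Leibniz rule, twice
  have hg : ∀ u : ℝ, HasDerivAt (fun u' => ∫ t in (0:ℝ)..u', K u' t *ᵥ φ t)
      ((K u u *ᵥ φ u) + ∫ t in (0:ℝ)..u, deriv (fun a => K a t) u *ᵥ φ t) u :=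
    fun u => leibniz_aux (fun s t => K s t *ᵥ φ t)
      (fun s t => deriv (fun a => K a t) s *ᵥ φ t) hFd hFc hFxc u
  have hh : ∀ u : ℝ, HasDerivAt (fun u' => ∫ t in (0:ℝ)..u', deriv (fun a => K a t) u' *ᵥ φ t)
      ((deriv (fun a => K a u) u *ᵥ φ u)
        + ∫ t in (0:ℝ)..u, deriv (fun a => deriv (fun a' => K a' t) a) u *ᵥ φ t) u :=
    fun u => leibniz_aux (fun s t => deriv (fun a => K a t) s *ᵥ φ t)
      (fun s t => deriv (fun a => deriv (fun a' => K a' t) a) s *ᵥ φ t) hFxd hFxc hFxxc u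
  -- derivative of the diagonal term
  have hdiagF : ∀ u : ℝ, HasDerivAt (fun s => K s s *ᵥ φ s)
      (deriv (fun s => K s s) u *ᵥ φ u + K u u *ᵥ deriv φ u) u :=
    fun u => hasDerivAt_mulVec (hasDerivAt_diag K hK1 u) (hφ1 u)
  -- first derivative of ψ
  have hψ1 : ∀ u : ℝ, HasDerivAt (fun u' => φ u' + ∫ t in (0:ℝ)..u', K u' t *ᵥ φ t)
      (deriv φ u + ((K u u *ᵥ φ u) + ∫ t in (0:ℝ)..u, deriv (fun a => K a t) u *ᵥ φ t)) u :=
    fun u => (hφ1 u).add (hg u)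
  have hdψ : deriv (fun u' => φ u' + ∫ t in (0:ℝ)..u', K u' t *ᵥ φ t)
      = fun u => deriv φ u + ((K u u *ᵥ φ u) + ∫ t in (0:ℝ)..u, deriv (fun a => K a t) u *ᵥ φ t) :=
    funext fun u => (hψ1 u).deriv
  -- second derivative of ψ
  have hψ2 : ∀ u : ℝ, HasDerivAt (deriv (fun u' => φ u' + ∫ t in (0:ℝ)..u', K u' t *ᵥ φ t))
      (deriv (deriv φ) u + ((deriv (fun s => K s s) u *ᵥ φ u + K u u *ᵥ deriv φ u)
        + ((deriv (fun a => K a u) u *ᵥ φ u)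
          + ∫ t in (0:ℝ)..u, deriv (fun a => deriv (fun a' => K a' t) a) u *ᵥ φ t))) u := by
    intro u
    rw [hdψ]
    exact (hφ2 u).add ((hdiagF u).add (hh u))
  have hd2ψ : ∀ u : ℝ, deriv (deriv (fun u' => φ u' + ∫ t in (0:ℝ)..u', K u' t *ᵥ φ t)) u
      = deriv (deriv φ) u + ((deriv (fun s => K s s) u *ᵥ φ u + K u u *ᵥ deriv φ u)
        + ((deriv (fun a => K a u) u *ᵥ φ u)
          + ∫ t in (0:ℝ)..u, deriv (fun a => deriv (fun a' => K a' t) a) u *ᵥ φ t)) :=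
    fun u => (hψ2 u).deriv
  refine ⟨?_, ?_, ?_⟩
  · intro x hx
    have hx0 : (0:ℝ) ≤ x := hx.1
    have hxπ : x ≤ Real.pi := hx.2
    have cx : Continuous fun t : ℝ => ((x, t) : ℝ × ℝ) := continuous_const.prodMk continuous_id
    have c1 : Continuous fun t => K x t *ᵥ φ t := hFc.comp cx
    have cKyy : Continuous fun t => deriv (fun a => deriv (fun a' => K x a') a) t *ᵥ φ t :=
      continuous_mulVec2 (hKyyc.comp cx) hφc
    have cKφ'' : Continuous fun t => K x t *ᵥ deriv (deriv φ) t :=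
      continuous_mulVec2 (hKc.comp cx) hφ''c
    -- FTC for the double integration by parts
    have hw : ∀ t : ℝ, HasDerivAt
        (fun τ => deriv (fun u => K x u) τ *ᵥ φ τ - K x τ *ᵥ deriv φ τ)
        (deriv (fun u => deriv (fun u' => K x u') u) t *ᵥ φ t
          - K x t *ᵥ deriv (deriv φ) t) t := by
      intro t
      have h1 := hasDerivAt_mulVec
        (hasDerivAt_pd2 (fun a b => deriv (fun u' => K a u') b) hKy1 x t) (hφ1 t)
      have h2 := hasDerivAt_mulVec (hasDerivAt_pd2 K hK1 x t) (hφ2 t)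
      have h3 := h1.sub h2
      refine h3.congr_deriv ?_
      have key : ∀ a b c : Fin N → ℝ, a + b - (b + c) = a - c := fun a b c => by abel
      exact key _ _ _
    have hFTC : (∫ t in (0:ℝ)..x, (deriv (fun u => deriv (fun u' => K x u') u) t *ᵥ φ t
          - K x t *ᵥ deriv (deriv φ) t))
        = (deriv (fun u => K x u) x *ᵥ φ x - K x x *ᵥ deriv φ x)
          - (deriv (fun u => K x u) 0 *ᵥ φ 0 - K x 0 *ᵥ deriv φ 0) :=
      intervalIntegral.integral_eq_sub_of_hasDerivAt (fun t _ => hw t)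
        ((cKyy.sub cKφ'').intervalIntegrable 0 x)
    -- pointwise rewriting of the integrand using the wave equation
    have hPφ : ∀ t ∈ Icc (0:ℝ) x, P t *ᵥ φ t = lam • φ t + deriv (deriv φ) t := by
      intro t ht
      have h := hφeq t ⟨ht.1, ht.2.trans hxπ⟩
      rw [← h]; abel
    have hcong : EqOn (fun t => deriv (fun a => deriv (fun a' => K a' t) a) x *ᵥ φ t)
        (fun t => (deriv (fun u => deriv (fun u' => K x u') u) t *ᵥ φ t
            - K x t *ᵥ deriv (deriv φ) t)
          - lam • (K x t *ᵥ φ t) + Q x *ᵥ (K x t *ᵥ φ t)) (uIcc 0 x) := by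
      intro t ht
      rw [uIcc_of_le hx0] at ht
      have hwv := hKwave x t ht.1 ht.2 hxπ
      have h4 : deriv (deriv (fun s => K s t)) x
          = (deriv (deriv (fun u => K x u)) t - K x t * P t) + Q x * K x t :=
        eq_add_of_sub_eq hwv
      show deriv (fun a => deriv (fun a' => K a' t) a) x *ᵥ φ t = _
      have e : deriv (fun a => deriv (fun a' => K a' t) a) x
          = deriv (deriv (fun s => K s t)) x := rfl
      have e2 : deriv (deriv (fun u => K x u)) t
          = deriv (fun u => deriv (fun u' => K x u') u) t := rfl
      rw [e, h4, e2, Matrix.add_mulVec, Matrix.sub_mulVec,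
        ← Matrix.mulVec_mulVec (φ t) (Q x) (K x t), ← Matrix.mulVec_mulVec (φ t) (K x t) (P t),
        hPφ t ht, Matrix.mulVec_add, Matrix.mulVec_smul]
      abel
    -- integrability
    have i1 : IntervalIntegrable (fun t => deriv (fun u => deriv (fun u' => K x u') u) t *ᵥ φ t
        - K x t *ᵥ deriv (deriv φ) t) volume 0 x := (cKyy.sub cKφ'').intervalIntegrable 0 x
    have i2 : IntervalIntegrable (fun t => lam • (K x t *ᵥ φ t)) volume 0 x :=
      (c1.const_smul lam).intervalIntegrable 0 x
    have i3 : IntervalIntegrable (fun t => Q x *ᵥ (K x t *ᵥ φ t)) volume 0 x :=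
      (continuous_mulVec2 continuous_const c1).intervalIntegrable 0 x
    have i0 : IntervalIntegrable (fun t => K x t *ᵥ φ t) volume 0 x :=
      c1.intervalIntegrable 0 x
    have hsplit : (∫ t in (0:ℝ)..x, deriv (fun a => deriv (fun a' => K a' t) a) x *ᵥ φ t)
        = ((deriv (fun u => K x u) x *ᵥ φ x - K x x *ᵥ deriv φ x)
            - (deriv (fun u => K x u) 0 *ᵥ φ 0 - K x 0 *ᵥ deriv φ 0))
          - lam • (∫ t in (0:ℝ)..x, K x t *ᵥ φ t)
          + Q x *ᵥ (∫ t in (0:ℝ)..x, K x t *ᵥ φ t) := by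
      rw [intervalIntegral.integral_congr hcong,
        intervalIntegral.integral_add (i1.sub i2) i3, intervalIntegral.integral_sub i1 i2,
        intervalIntegral.integral_smul, hFTC]
      congr 1
      exact (mulVecCLM N (Q x)).intervalIntegral_comp_comm i0
    have hbdry : deriv (fun u => K x u) 0 *ᵥ φ 0 - K x 0 *ᵥ deriv φ 0 = 0 := by
      rw [hφ0, hφ0', Matrix.mulVec_mulVec, Matrix.mulVec_mulVec, ← Matrix.sub_mulVec]
      have hb := hKbc x hx
      have hz : deriv (fun u => K x u) 0 * Bᵀ - K x 0 * -Aᵀ = 0 := by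
        rw [Matrix.mul_neg, sub_neg_eq_add, add_comm]
        exact hb
      rw [hz, Matrix.zero_mulVec]
    have hchain : deriv (fun s => K s s) x
        = deriv (fun s => K s x) x + deriv (fun t => K x t) x := deriv_diag K hK1 x
    have hq := hQdef x hx
    have hPφx : P x *ᵥ φ x = lam • φ x + deriv (deriv φ) x := by
      have h := hφeq x hx
      rw [← h]; abel
    show -(deriv (deriv (fun u' => φ u' + ∫ t in (0:ℝ)..u', K u' t *ᵥ φ t)) x)
        + Q x *ᵥ (φ x + ∫ t in (0:ℝ)..x, K x t *ᵥ φ t)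
        = lam • (φ x + ∫ t in (0:ℝ)..x, K x t *ᵥ φ t)
    rw [hd2ψ x, hsplit, hbdry, hq, hchain]
    simp only [Matrix.add_mulVec, Matrix.mulVec_add, Matrix.smul_mulVec, two_smul,
      sub_zero, hPφx, smul_add]
    abel
  · simp [hφ0]
  · rw [hdψ]
    simp only [intervalIntegral.integral_same, add_zero, hφ0, hφ0']
    rw [Matrix.add_mulVec, Matrix.mulVec_mulVec]
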